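/- Let N ≥ 2 and let T₁, …, T_N be independent random variables, each uniformly distributed on [0,T] with T > 0. For n ∈ ℕ with n ≥ 2, the probability that |T_i - T_j| ≥ T/n for all i ≠ j is at least ∏_{j=1}^{N-1} (1 - 2j/n) (interpreted as 0 if some factor is negative). -/

import Mathlib

open MeasureTheory ProbabilityTheory Finset
open scoped ENNReal

noncomputable def unifM (T : ℝ) : Measure ℝ :=
  (ENNReal.ofReal T)⁻¹ • volume.restrict (Set.Icc 0 T)

lemma unifM_prob {T : ℝ} (hT : 0 < T) : IsProbabilityMeasure (unifM T) := by
  constructor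
  simp only [unifM, Measure.smul_apply, Measure.restrict_apply MeasurableSet.univ,
    Set.univ_inter, Real.volume_Icc, sub_zero, smul_eq_mul]
  rw [ENNReal.inv_mul_cancel (by simp [hT]) (by simp)]

lemma unifM_avoid {T : ℝ} (hT : 0 < T) {n : ℕ} (hn : 2 ≤ n) (m : ℕ) (y : Fin m → ℝ) :
    ENNReal.ofReal (max (1 - 2 * (m : ℝ) / n) 0) ≤
      unifM T {x | ∀ j, T / n ≤ |x - y j|} := by
  haveI := unifM_prob hT
  have hn0 : (0:ℝ) < n := by positivity
  rcases le_or_gt (1 - 2 * (m : ℝ) / n) 0 with h0 | h0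
  · simp [max_eq_right h0]
  set A : Set ℝ := {x | ∀ j, T / n ≤ |x - y j|} with hA
  have hAm : MeasurableSet A := by
    have : A = ⋂ j, {x | T / n ≤ |x - y j|} := by ext x; simp [hA]
    rw [this]
    exact MeasurableSet.iInter fun j =>
      measurableSet_le measurable_const ((measurable_id.sub_const (y j)).abs)
  have hball : ∀ c : ℝ, unifM T (Metric.ball c (T / n)) ≤ ENNReal.ofReal (2 / n) := by
    intro c
    have : unifM T (Metric.ball c (T / n)) ≤
        (ENNReal.ofReal T)⁻¹ * volume (Metric.ball c (T / n)) := by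
      simp only [unifM, Measure.smul_apply, smul_eq_mul]
      exact mul_le_mul_right (Measure.restrict_apply_le _ _) _
    refine this.trans ?_
    rw [Real.volume_ball]
    have h2 : (2 : ℝ) * (T / n) = T * (2 / n) := by ring
    rw [h2, ENNReal.ofReal_mul hT.le, ← mul_assoc,
      ENNReal.inv_mul_cancel (by simp [hT]) (by simp), one_mul]
  have hcompl : unifM T Aᶜ ≤ ENNReal.ofReal (2 * (m : ℝ) / n) := by
    have hsub : Aᶜ ⊆ ⋃ j, Metric.ball (y j) (T / n) := by
      intro x hx
      simp only [hA, Set.mem_compl_iff, Set.mem_setOf_eq, not_forall, not_le] at hx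
      obtain ⟨j, hj⟩ := hx
      exact Set.mem_iUnion.2 ⟨j, by simpa [Real.dist_eq] using hj⟩
    calc unifM T Aᶜ ≤ unifM T (⋃ j, Metric.ball (y j) (T / n)) := measure_mono hsub
      _ ≤ ∑ j : Fin m, unifM T (Metric.ball (y j) (T / n)) := measure_iUnion_fintype_le _ _
      _ ≤ ∑ _j : Fin m, ENNReal.ofReal (2 / n) := Finset.sum_le_sum fun j _ => hball _
      _ = (m : ℝ≥0∞) * ENNReal.ofReal (2 / n) := by
          simp [Finset.sum_const, nsmul_eq_mul]
      _ = ENNReal.ofReal (2 * (m : ℝ) / n) := by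
          rw [← ENNReal.ofReal_natCast, ← ENNReal.ofReal_mul (by positivity)]
          congr 1; ring
  have key : ENNReal.ofReal (1 - 2 * (m : ℝ) / n) ≤ unifM T A := by
    have h1 : ENNReal.ofReal (1 - 2 * (m : ℝ) / n) =
        1 - ENNReal.ofReal (2 * (m : ℝ) / n) := by
      rw [ENNReal.ofReal_sub _ (by positivity), ENNReal.ofReal_one]
    rw [h1]
    have h2 : (1 : ℝ≥0∞) - unifM T Aᶜ ≤ unifM T A := by
      rw [tsub_le_iff_right]
      rw [measure_add_measure_compl hAm, measure_univ]
    exact le_trans (tsub_le_tsub_left hcompl 1) h2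
  rwa [max_eq_left h0.le]

lemma spacing_measurable (n N : ℕ) (T : ℝ) :
    MeasurableSet {x : Fin N → ℝ | ∀ i j, i ≠ j → T / n ≤ |x i - x j|} := by
  have : {x : Fin N → ℝ | ∀ i j, i ≠ j → T / n ≤ |x i - x j|} =
      ⋂ i, ⋂ j, ⋂ (_ : i ≠ j), {x | T / n ≤ |x i - x j|} := by
    ext x; simp
  rw [this]
  exact MeasurableSet.iInter fun i => MeasurableSet.iInter fun j =>
    MeasurableSet.iInter fun _ =>
      measurableSet_le measurable_const ((measurable_pi_apply i).sub (measurable_pi_apply j)).abs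

lemma pi_spacing {T : ℝ} (hT : 0 < T) {n : ℕ} (hn : 2 ≤ n) : ∀ N : ℕ,
    ∏ j ∈ Finset.Icc 1 N, ENNReal.ofReal (max (1 - 2 * (j : ℝ) / n) 0) ≤
      Measure.pi (fun _ : Fin (N + 1) => unifM T)
        {x | ∀ i j, i ≠ j → T / n ≤ |x i - x j|} := by
  haveI := unifM_prob hT
  intro N
  induction N with
  | zero =>
    have : {x : Fin 1 → ℝ | ∀ i j, i ≠ j → T / n ≤ |x i - x j|} = Set.univ := by
      ext x
      simp only [Set.mem_setOf_eq, Set.mem_univ, iff_true]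
      intro i j hij
      exact absurd (Subsingleton.elim i j) hij
    simp [this]
  | succ N ih =>
    set c : ℝ≥0∞ := ENNReal.ofReal (max (1 - 2 * ((N + 1 : ℕ) : ℝ) / n) 0) with hc
    set S1 : Set (Fin (N + 1) → ℝ) := {x | ∀ i j, i ≠ j → T / n ≤ |x i - x j|} with hS1
    set S2 : Set (Fin (N + 2) → ℝ) := {x | ∀ i j, i ≠ j → T / n ≤ |x i - x j|} with hS2
    set T2 : Set (ℝ × (Fin (N + 1) → ℝ)) :=
      {p | (∀ j, T / n ≤ |p.1 - p.2 j|) ∧ ∀ i j, i ≠ j → T / n ≤ |p.2 i - p.2 j|} with hT2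
    have hT2m : MeasurableSet T2 := by
      have h1 : MeasurableSet {p : ℝ × (Fin (N + 1) → ℝ) | ∀ j, T / n ≤ |p.1 - p.2 j|} := by
        have : {p : ℝ × (Fin (N + 1) → ℝ) | ∀ j, T / n ≤ |p.1 - p.2 j|} =
            ⋂ j, {p | T / n ≤ |p.1 - p.2 j|} := by ext p; simp
        rw [this]
        refine MeasurableSet.iInter fun j => measurableSet_le measurable_const ?_
        have hm : Measurable fun p : ℝ × (Fin (N + 1) → ℝ) => |p.1 - p.2 j| :=
          by fun_prop
        exact hm
      have h2 : MeasurableSet {p : ℝ × (Fin (N + 1) → ℝ) |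
          ∀ i j, i ≠ j → T / n ≤ |p.2 i - p.2 j|} :=
        measurable_snd (spacing_measurable n (N + 1) T)
      exact h1.inter h2
    set e := MeasurableEquiv.piFinSuccAbove (fun _ : Fin (N + 2) => ℝ) (Fin.last (N + 1)) with he
    have hmp : MeasurePreserving e (Measure.pi fun _ : Fin (N + 2) => unifM T)
        ((unifM T).prod (Measure.pi fun _ : Fin (N + 1) => unifM T)) :=
      measurePreserving_piFinSuccAbove (fun _ : Fin (N + 2) => unifM T) (Fin.last (N + 1))
    have hpre : e ⁻¹' T2 = S2 := by
      ext x
      have hex : e x = (x (Fin.last (N + 1)),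
          fun j : Fin (N + 1) => x ((Fin.last (N + 1)).succAbove j)) := rfl
      simp only [Set.mem_preimage, hex, hT2, Set.mem_setOf_eq, hS2, Fin.succAbove_last,
        Fin.succAbove_last_apply]
      constructor
      · rintro ⟨h1, h2⟩ i j hij
        rcases Fin.eq_castSucc_or_eq_last i with ⟨i', rfl⟩ | rfl
        · rcases Fin.eq_castSucc_or_eq_last j with ⟨j', rfl⟩ | rfl
          · exact h2 i' j' (fun h => hij (by rw [h]))
          · rw [abs_sub_comm]; exact h1 i'
        · rcases Fin.eq_castSucc_or_eq_last j with ⟨j', rfl⟩ | rfl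
          · exact h1 j'
          · exact absurd rfl hij
      · intro h
        refine ⟨fun j => h _ _ (Fin.ne_of_gt (Fin.castSucc_lt_last j)),
          fun i j hij => h _ _ ?_⟩
        simp only [ne_eq, Fin.castSucc_inj]
        exact hij
    have step1 : (Measure.pi fun _ : Fin (N + 2) => unifM T) S2 =
        ((unifM T).prod (Measure.pi fun _ : Fin (N + 1) => unifM T)) T2 := by
      rw [← hpre, hmp.measure_preimage hT2m.nullMeasurableSet]
    have step2 : ((unifM T).prod (Measure.pi fun _ : Fin (N + 1) => unifM T)) T2 =
        ∫⁻ y, unifM T ((fun x => (x, y)) ⁻¹' T2)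
          ∂(Measure.pi fun _ : Fin (N + 1) => unifM T) :=
      Measure.prod_apply_symm hT2m
    have hpoint : ∀ y : Fin (N + 1) → ℝ,
        S1.indicator (fun _ => c) y ≤ unifM T ((fun x => (x, y)) ⁻¹' T2) := by
      intro y
      by_cases hy : y ∈ S1
      · rw [Set.indicator_of_mem hy]
        have hsub : {x : ℝ | ∀ j, T / n ≤ |x - y j|} ⊆ (fun x => (x, y)) ⁻¹' T2 := by
          intro x hx
          exact ⟨hx, hy⟩
        calc c ≤ unifM T {x : ℝ | ∀ j, T / n ≤ |x - y j|} := by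
                rw [hc]; exact unifM_avoid hT hn (N + 1) y
          _ ≤ _ := measure_mono hsub
      · rw [Set.indicator_of_notMem hy]; exact zero_le
    have step3 : c * (Measure.pi fun _ : Fin (N + 1) => unifM T) S1 ≤
        ∫⁻ y, unifM T ((fun x => (x, y)) ⁻¹' T2)
          ∂(Measure.pi fun _ : Fin (N + 1) => unifM T) := by
      refine le_trans (le_of_eq ?_) (lintegral_mono hpoint)
      rw [lintegral_indicator (spacing_measurable n (N + 1) T), setLIntegral_const]
    rw [Finset.prod_Icc_succ_top (by omega)]
    calc (∏ j ∈ Finset.Icc 1 N, ENNReal.ofReal (max (1 - 2 * (j : ℝ) / n) 0)) *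
          ENNReal.ofReal (max (1 - 2 * ((N + 1 : ℕ) : ℝ) / n) 0)
        ≤ (Measure.pi fun _ : Fin (N + 1) => unifM T) S1 * c :=
          mul_le_mul_left ih c
      _ = c * (Measure.pi fun _ : Fin (N + 1) => unifM T) S1 := mul_comm _ _
      _ ≤ _ := by rw [step1, step2]; exact step3

theorem stmt_9 {Ω : Type*} [MeasurableSpace Ω] (P : Measure Ω) [IsProbabilityMeasure P]
    (N n : ℕ) (hN : 2 ≤ N) (hn : 2 ≤ n) (T : ℝ) (hT : 0 < T)
    (X : Fin N → Ω → ℝ) (hmeas : ∀ i, Measurable (X i))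
    (hindep : iIndepFun X P)
    (hunif : ∀ i, Measure.map (X i) P =
      (ENNReal.ofReal T)⁻¹ • volume.restrict (Set.Icc 0 T)) :
    ENNReal.ofReal (∏ j ∈ Finset.Icc 1 (N - 1), max (1 - 2 * (j : ℝ) / n) 0) ≤
      P {ω | ∀ i j : Fin N, i ≠ j → T / n ≤ |X i ω - X j ω|} := by
  haveI := unifM_prob hT
  set Y : Ω → (Fin N → ℝ) := fun ω i => X i ω with hY
  have hYm : Measurable Y := measurable_pi_lambda _ hmeas
  have hmap : Measure.map Y P = Measure.pi (fun _ : Fin N => unifM T) := by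
    symm
    apply Measure.pi_eq
    intro s hs
    rw [Measure.map_apply hYm (MeasurableSet.univ_pi hs)]
    have hYp : Y ⁻¹' Set.pi Set.univ s = ⋂ i ∈ Finset.univ, X i ⁻¹' s i := by
      ext ω; simp [hY, Set.mem_pi]
    rw [hYp, hindep.measure_inter_preimage_eq_mul Finset.univ (fun i _ => hs i)]
    refine Finset.prod_congr rfl fun i _ => ?_
    rw [← Measure.map_apply (hmeas i) (hs i), hunif i]
    rfl
  have hev : {ω | ∀ i j : Fin N, i ≠ j → T / n ≤ |X i ω - X j ω|} =
      Y ⁻¹' {x : Fin N → ℝ | ∀ i j, i ≠ j → T / n ≤ |x i - x j|} := rfl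
  rw [hev, ← Measure.map_apply hYm (spacing_measurable n N T), hmap]
  obtain ⟨M, rfl⟩ : ∃ M, N = M + 1 := ⟨N - 1, by omega⟩
  have hM : M + 1 - 1 = M := rfl
  rw [hM, ENNReal.ofReal_prod_of_nonneg (fun j _ => le_max_right _ _)]
  exact pi_spacing hT hn M
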